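/- Let k ≥ 1, let a : Fin (2k) → ℕ with a i > 0 for all i, and let m : ℕ satisfy ∏_i a i = m². In the fraction field F of MvPolynomial (Fin 2) ℚ write x, y for the images of X 0, X 1, let ι = Fin (2k) ⊕ Fin 2, and define v : ι → F by v (inl 0) = a 0 · x · y, v (inl i) = a i · x for i ≠ 0, v (inr 0) = m · x^k, and v (inr 1) = m · x^k · y. Then the following are equivalent: (1) there exist a finite partition π of ι into nonempty blocks and, for each block B, a distinguished element d(B) ∈ B, such that ∑_{B ∈ π} v (d B) / ∏_{j ∈ B, j ≠ d B} v j = 2 in F; (2) there exists S : Finset (Fin (2k)) with S.card = k and ∏_{i ∈ S} a i = m. -/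

import Mathlib

open Finset MvPolynomial

private abbrev R2 := MvPolynomial (Fin 2) ℚ
private abbrev FF := FractionRing R2

private lemma alg_monomial (μ : Fin 2 →₀ ℕ) (c : ℚ) :
    algebraMap R2 FF (monomial μ c) =
      (c : FF) * (algebraMap R2 FF (X 0)) ^ (μ 0) * (algebraMap R2 FF (X 1)) ^ (μ 1) := by
  rw [monomial_eq, Finsupp.prod_fintype _ _ (fun i => pow_zero _), Fin.prod_univ_two]
  rw [map_mul, map_mul, map_pow, map_pow, mul_assoc]
  congr 1
  show algebraMap R2 FF (C c) = (c : FF)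
  rw [show (C c : R2) = algebraMap ℚ R2 c from rfl, ← IsScalarTower.algebraMap_apply]
  exact eq_ratCast _ c

private lemma prod_monomial {β : Type*} (s : Finset β) (ν : β → (Fin 2 →₀ ℕ)) (c : β → ℚ) :
    ∏ b ∈ s, (monomial (ν b) (c b) : R2) = monomial (∑ b ∈ s, ν b) (∏ b ∈ s, c b) := by
  induction s using Finset.cons_induction with
  | empty => simp [monomial_eq]
  | cons b s hb ih => rw [Finset.prod_cons, ih, monomial_mul, Finset.sum_cons, Finset.prod_cons]

private lemma mono_indep {β : Type*} (s : Finset β) (ν : β → (Fin 2 →₀ ℕ)) (c : β → ℚ)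
    (hc : ∀ b ∈ s, 0 < c b) (ν₀ : Fin 2 →₀ ℕ) (c₀ : ℚ)
    (h : ∑ b ∈ s, (monomial (ν b) (c b) : R2) = monomial ν₀ c₀) :
    ∀ b ∈ s, ν b = ν₀ := by
  intro b hb
  have h2 := congrArg (coeff (ν b)) h
  rw [coeff_monomial] at h2
  rw [coeff_sum] at h2
  simp only [coeff_monomial] at h2
  have hpos : 0 < ∑ b' ∈ s, if ν b' = ν b then c b' else 0 := by
    apply Finset.sum_pos' (fun b' hb' => by split <;> [exact (hc b' hb').le; rfl])
    exact ⟨b, hb, by simp [hc b hb]⟩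
  rw [h2] at hpos
  by_contra hne
  rw [if_neg (fun h => hne h.symm)] at hpos
  exact lt_irrefl 0 hpos

set_option maxHeartbeats 1600000 in
theorem stmt_7 (k : ℕ) (hk : 1 ≤ k) (a : Fin (2 * k) → ℕ) (ha : ∀ i, 0 < a i)
    (m : ℕ) (hm : ∏ i, a i = m ^ 2)
    (x y : FractionRing (MvPolynomial (Fin 2) ℚ))
    (hx : x = algebraMap (MvPolynomial (Fin 2) ℚ)
      (FractionRing (MvPolynomial (Fin 2) ℚ)) (MvPolynomial.X 0))
    (hy : y = algebraMap (MvPolynomial (Fin 2) ℚ)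
      (FractionRing (MvPolynomial (Fin 2) ℚ)) (MvPolynomial.X 1))
    (v : Fin (2 * k) ⊕ Fin 2 → FractionRing (MvPolynomial (Fin 2) ℚ))
    (hv0 : ∀ i : Fin (2 * k), (i : ℕ) = 0 →
      v (Sum.inl i) = (a i : FractionRing (MvPolynomial (Fin 2) ℚ)) * x * y)
    (hv1 : ∀ i : Fin (2 * k), (i : ℕ) ≠ 0 →
      v (Sum.inl i) = (a i : FractionRing (MvPolynomial (Fin 2) ℚ)) * x)
    (hv2 : v (Sum.inr 0) = (m : FractionRing (MvPolynomial (Fin 2) ℚ)) * x ^ k)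
    (hv3 : v (Sum.inr 1) = (m : FractionRing (MvPolynomial (Fin 2) ℚ)) * x ^ k * y) :
    (∃ π : Finpartition (Finset.univ : Finset (Fin (2 * k) ⊕ Fin 2)),
      ∃ d : Finset (Fin (2 * k) ⊕ Fin 2) → Fin (2 * k) ⊕ Fin 2,
        (∀ B ∈ π.parts, d B ∈ B) ∧
        ∑ B ∈ π.parts, v (d B) / ∏ j ∈ B.erase (d B), v j = 2) ↔
    (∃ S : Finset (Fin (2 * k)), S.card = k ∧ ∏ i ∈ S, a i = m) := by
  haveI : NeZero (2 * k) := ⟨by omega⟩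
  have hmpos : 0 < m := by
    rcases Nat.eq_zero_or_pos m with h | h
    · exfalso
      have hp : 0 < ∏ i, a i := Finset.prod_pos (fun i _ => ha i)
      rw [hm, h] at hp; simp at hp
    · exact h
  subst hx hy
  set x := algebraMap R2 FF (X 0) with hx
  set y := algebraMap R2 FF (X 1) with hy
  have hinj : Function.Injective (algebraMap R2 FF) := IsFractionRing.injective R2 FF
  have hx0 : x ≠ 0 := by
    rw [hx]
    intro h
    exact MvPolynomial.X_ne_zero 0 (hinj (by rw [h, map_zero]))
  have hy0 : y ≠ 0 := by
    rw [hy]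
    intro h
    exact MvPolynomial.X_ne_zero 1 (hinj (by rw [h, map_zero]))
  have hziff : ∀ i : Fin (2 * k), ((i : ℕ) = 0) ↔ i = 0 := fun i => Fin.val_eq_zero_iff
  have h01 : ∀ j : Fin 2, j = 0 ∨ j = 1 := by decide
  -- exponent and coefficient data
  set e : Fin (2 * k) ⊕ Fin 2 → ℕ := Sum.elim (fun _ => 1) (fun _ => k) with he
  set f : Fin (2 * k) ⊕ Fin 2 → ℕ :=
    Sum.elim (fun i => if (i : ℕ) = 0 then 1 else 0) (fun j => if (j : ℕ) = 0 then 0 else 1)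
    with hf
  set c : Fin (2 * k) ⊕ Fin 2 → ℕ := Sum.elim a (fun _ => m) with hc
  set μ : Fin (2 * k) ⊕ Fin 2 → (Fin 2 →₀ ℕ) :=
    fun i => Finsupp.single 0 (e i) + Finsupp.single 1 (f i) with hμ
  have hμ0 : ∀ i, μ i 0 = e i := by intro i; simp [hμ]
  have hμ1 : ∀ i, μ i 1 = f i := by intro i; simp [hμ]
  have hcpos : ∀ i, 0 < c i := by
    intro i; rcases i with i | j
    · exact ha i
    · exact hmpos
  have hvmono : ∀ i, v i = algebraMap R2 FF (monomial (μ i) ((c i : ℚ))) := by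
    intro i
    rw [alg_monomial, hμ0, hμ1, ← hx, ← hy]
    rcases i with i | j
    · by_cases h0 : (i : ℕ) = 0
      · rw [hv0 i h0]; simp [he, hf, hc, h0, (hziff i).1 h0]
      · rw [hv1 i h0]; simp [he, hf, hc, h0, mt (hziff i).2 h0]
    · rcases h01 j with rfl | rfl
      · rw [hv2]; simp [he, hf, hc]
      · rw [hv3]; simp [he, hf, hc]
  have hprodv : ∀ W : Finset (Fin (2 * k) ⊕ Fin 2),
      ∏ j ∈ W, v j =
        ((∏ j ∈ W, c j : ℕ) : FF) * x ^ (∑ j ∈ W, e j) * y ^ (∑ j ∈ W, f j) := by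
    intro W
    calc ∏ j ∈ W, v j = ∏ j ∈ W, algebraMap R2 FF (monomial (μ j) ((c j : ℚ))) := by
          exact Finset.prod_congr rfl fun j _ => hvmono j
    _ = algebraMap R2 FF (∏ j ∈ W, monomial (μ j) ((c j : ℚ))) := (map_prod _ _ _).symm
    _ = algebraMap R2 FF (monomial (∑ j ∈ W, μ j) (∏ j ∈ W, (c j : ℚ))) := by
          rw [prod_monomial]
    _ = _ := by
          rw [alg_monomial, ← hx, ← hy, Finsupp.finset_sum_apply, Finsupp.finset_sum_apply]
          simp_rw [hμ0, hμ1]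
          push_cast
          ring
  constructor
  · rintro ⟨π, d, hd, hsum⟩
    classical
    set Sν : Finset (Fin (2 * k) ⊕ Fin 2) → (Fin 2 →₀ ℕ) :=
      fun B => ∑ j ∈ B.erase (d B), μ j with hSν
    set D : Finset (Fin (2 * k) ⊕ Fin 2) → ℚ :=
      fun B => ∏ j ∈ B.erase (d B), (c j : ℚ) with hDdef
    have hDpos : ∀ B, 0 < D B :=
      fun B => Finset.prod_pos (fun j _ => by exact_mod_cast hcpos j)
    set q : Finset (Fin (2 * k) ⊕ Fin 2) → R2 := fun B => monomial (Sν B) (D B) with hqdef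
    have hden : ∀ B, ∏ j ∈ B.erase (d B), v j = algebraMap R2 FF (q B) := by
      intro B
      rw [Finset.prod_congr rfl (fun j _ => hvmono j), ← map_prod, prod_monomial]
    have hq0 : ∀ B, algebraMap R2 FF (q B) ≠ 0 := by
      intro B h
      have h2 : q B = 0 := hinj (by rw [h, map_zero])
      rw [hqdef] at h2
      rw [monomial_eq_zero] at h2
      exact (hDpos B).ne' h2
    have key : ∀ B ∈ π.parts,
        v (d B) / (∏ j ∈ B.erase (d B), v j) * algebraMap R2 FF (∏ B' ∈ π.parts, q B') =
          algebraMap R2 FF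
            (monomial (μ (d B)) ((c (d B) : ℚ)) * ∏ B' ∈ π.parts.erase B, q B') := by
      intro B hB
      rw [hden B, hvmono (d B), map_mul, map_prod, map_prod,
        ← Finset.mul_prod_erase π.parts (fun B' => algebraMap R2 FF (q B')) hB]
      rw [div_mul_eq_mul_div,
        mul_comm (algebraMap R2 FF (q B)) (∏ x ∈ π.parts.erase B, algebraMap R2 FF (q x)),
        ← mul_assoc, mul_div_cancel_right₀ _ (hq0 B)]
    have hpoly : ∑ B ∈ π.parts,
        (monomial (μ (d B)) ((c (d B) : ℚ)) * ∏ B' ∈ π.parts.erase B, q B') =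
        2 * ∏ B ∈ π.parts, q B := by
      apply hinj
      rw [map_sum, map_mul]
      have h3 := congrArg (fun z => z * algebraMap R2 FF (∏ B' ∈ π.parts, q B')) hsum
      simp only [Finset.sum_mul] at h3
      rw [Finset.sum_congr rfl (fun B hB => (key B hB).symm), h3]
      congr 1
      exact (map_ofNat (algebraMap R2 FF) 2).symm
    have hterm_mono : ∑ B ∈ π.parts,
        (monomial (μ (d B) + ∑ B' ∈ π.parts.erase B, Sν B')
          ((c (d B) : ℚ) * ∏ B' ∈ π.parts.erase B, D B') : R2) =
        monomial (∑ B ∈ π.parts, Sν B) ((2 : ℚ) * ∏ B ∈ π.parts, D B) := by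
      have hL : ∀ B ∈ π.parts,
          (monomial (μ (d B) + ∑ B' ∈ π.parts.erase B, Sν B')
            ((c (d B) : ℚ) * ∏ B' ∈ π.parts.erase B, D B') : R2) =
          monomial (μ (d B)) ((c (d B) : ℚ)) * ∏ B' ∈ π.parts.erase B, q B' := by
        intro B hB
        simp only [hqdef]
        rw [prod_monomial, monomial_mul]
      rw [Finset.sum_congr rfl hL, hpoly]
      simp only [hqdef]
      rw [prod_monomial, show ((2 : R2)) = C (2 : ℚ) from (map_ofNat C 2).symm, C_mul_monomial]
    have hνTot := mono_indep π.parts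
      (fun B => μ (d B) + ∑ B' ∈ π.parts.erase B, Sν B')
      (fun B => (c (d B) : ℚ) * ∏ B' ∈ π.parts.erase B, D B')
      (fun B _ => mul_pos (by exact_mod_cast hcpos (d B))
        (Finset.prod_pos fun B' _ => hDpos B'))
      (∑ B ∈ π.parts, Sν B) ((2 : ℚ) * ∏ B ∈ π.parts, D B) hterm_mono
    have hμd : ∀ B ∈ π.parts, μ (d B) = Sν B := by
      intro B hB
      have h1 := hνTot B hB
      have h2 : Sν B + ∑ B' ∈ π.parts.erase B, Sν B' = ∑ B' ∈ π.parts, Sν B' :=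
        Finset.add_sum_erase _ _ hB
      exact add_right_cancel (h1.trans h2.symm)
    have hEe : ∀ B ∈ π.parts, ∑ j ∈ B, e j = 2 * e (d B) := by
      intro B hB
      have h1 := congrArg (fun z => z 0) (hμd B hB)
      simp only [hμ0, hSν] at h1
      rw [Finsupp.finset_sum_apply] at h1
      simp only [hμ0] at h1
      have h2 : e (d B) + ∑ j ∈ B.erase (d B), e j = ∑ j ∈ B, e j :=
        Finset.add_sum_erase _ _ (hd B hB)
      omega
    have hEf : ∀ B ∈ π.parts, ∑ j ∈ B, f j = 2 * f (d B) := by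
      intro B hB
      have h1 := congrArg (fun z => z 1) (hμd B hB)
      simp only [hμ1, hSν] at h1
      rw [Finsupp.finset_sum_apply] at h1
      simp only [hμ1] at h1
      have h2 : f (d B) + ∑ j ∈ B.erase (d B), f j = ∑ j ∈ B, f j :=
        Finset.add_sum_erase _ _ (hd B hB)
      omega
    have hsum_e : ∀ W : Finset (Fin (2 * k) ⊕ Fin 2), ∑ j ∈ W, e j =
        W.card + (k - 1) * ((if Sum.inr 0 ∈ W then 1 else 0) +
          (if Sum.inr 1 ∈ W then 1 else 0)) := by
      intro W
      have hpt : ∀ j, e j = 1 + ((if j = Sum.inr 0 then k - 1 else 0) +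
          (if j = Sum.inr 1 then k - 1 else 0)) := by
        intro j
        rcases j with i | jj
        · simp [he]
        · rcases h01 jj with rfl | rfl <;> simp [he] <;> omega
      rw [Finset.sum_congr rfl (fun j _ => hpt j), Finset.sum_add_distrib,
        Finset.sum_add_distrib, Finset.sum_const, smul_eq_mul, mul_one,
        Finset.sum_ite_eq' W (Sum.inr 0) (fun _ => k - 1),
        Finset.sum_ite_eq' W (Sum.inr 1) (fun _ => k - 1)]
      split_ifs <;> ring
    have hsum_f : ∀ W : Finset (Fin (2 * k) ⊕ Fin 2), ∑ j ∈ W, f j =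
        (if Sum.inl 0 ∈ W then 1 else 0) + (if Sum.inr 1 ∈ W then 1 else 0) := by
      intro W
      have hpt : ∀ j, f j = (if j = Sum.inl 0 then 1 else 0) +
          (if j = Sum.inr 1 then 1 else 0) := by
        intro j
        rcases j with i | jj
        · by_cases h : i = (0 : Fin (2 * k)) <;> simp [hf, hziff i, h]
        · rcases h01 jj with rfl | rfl <;> simp [hf]
      rw [Finset.sum_congr rfl (fun j _ => hpt j), Finset.sum_add_distrib,
        Finset.sum_ite_eq' W (Sum.inl 0) (fun _ => 1),
        Finset.sum_ite_eq' W (Sum.inr 1) (fun _ => 1)]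
    have hf1 : ∀ j, f j = 1 → j = Sum.inl 0 ∨ j = Sum.inr 1 := by
      intro j hj
      rcases j with i | jj
      · left
        simp only [hf, Sum.elim_inl] at hj
        have : (i : ℕ) = 0 := by by_contra h; rw [if_neg h] at hj; omega
        rw [(hziff i).1 this]
      · right
        rcases h01 jj with rfl | rfl
        · simp [hf] at hj
        · rfl
    obtain ⟨B0, hB0p, hB0mem⟩ := π.exists_mem (Finset.mem_univ (Sum.inl (0 : Fin (2 * k))))
    obtain ⟨C0, hC0p, hC0mem⟩ := π.exists_mem (Finset.mem_univ (Sum.inr (0 : Fin 2)))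
    have hfB0 := hEf B0 hB0p
    rw [hsum_f, if_pos hB0mem] at hfB0
    have hinr1B0 : Sum.inr 1 ∈ B0 := by
      by_contra h
      rw [if_neg h] at hfB0
      omega
    rw [if_pos hinr1B0] at hfB0
    have hdB0or : d B0 = Sum.inl 0 ∨ d B0 = Sum.inr 1 := hf1 _ (by omega)
    have hinr0B0 : Sum.inr 0 ∉ B0 := by
      intro h
      have hsub : {Sum.inl (0 : Fin (2 * k)), Sum.inr (0 : Fin 2), Sum.inr 1} ⊆ B0 := by
        intro z hz
        simp only [Finset.mem_insert, Finset.mem_singleton] at hz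
        rcases hz with rfl | rfl | rfl
        · exact hB0mem
        · exact h
        · exact hinr1B0
      have hcard3 : 3 ≤ B0.card := by
        have h3 : ({Sum.inl (0 : Fin (2 * k)), Sum.inr (0 : Fin 2), Sum.inr 1} :
            Finset (Fin (2 * k) ⊕ Fin 2)).card = 3 := by
          rw [Finset.card_insert_of_notMem (by simp), Finset.card_insert_of_notMem (by simp),
            Finset.card_singleton]
        exact le_trans (le_of_eq h3.symm) (Finset.card_le_card hsub)
      have hEB0 := hEe B0 hB0p
      rw [hsum_e, if_pos h, if_pos hinr1B0] at hEB0
      rcases hdB0or with h1 | h1 <;> rw [h1] at hEB0 <;> simp only [he, Sum.elim_inl,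
        Sum.elim_inr] at hEB0 <;> omega
    have hB0C0 : B0 ≠ C0 := fun h => hinr0B0 (h ▸ hC0mem)
    have hinl0C0 : Sum.inl 0 ∉ C0 :=
      fun h => hB0C0 (π.eq_of_mem_parts hB0p hC0p hB0mem h)
    have hinr1C0 : Sum.inr 1 ∉ C0 :=
      fun h => hB0C0 (π.eq_of_mem_parts hB0p hC0p hinr1B0 h)
    -- card of B0
    have hEB0 := hEe B0 hB0p
    rw [hsum_e, if_neg hinr0B0, if_pos hinr1B0] at hEB0
    have hcardB0 : B0.card = k + 1 := by
      rcases hdB0or with h1 | h1 <;> rw [h1] at hEB0 <;>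
        simp only [he, Sum.elim_inl, Sum.elim_inr] at hEB0
      · have hsub : {Sum.inl (0 : Fin (2 * k)), Sum.inr (1 : Fin 2)} ⊆ B0 := by
          intro z hz
          simp only [Finset.mem_insert, Finset.mem_singleton] at hz
          rcases hz with rfl | rfl
          · exact hB0mem
          · exact hinr1B0
        have h2 : 2 ≤ B0.card := by
          have h3 : ({Sum.inl (0 : Fin (2 * k)), Sum.inr (1 : Fin 2)} :
              Finset (Fin (2 * k) ⊕ Fin 2)).card = 2 := by
            rw [Finset.card_insert_of_notMem (by simp), Finset.card_singleton]
          exact le_trans (le_of_eq h3.symm) (Finset.card_le_card hsub)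
        omega
      · omega
    have hdB0k : d B0 = Sum.inr 1 ∨ (k = 1 ∧ d B0 = Sum.inl 0) := by
      rcases hdB0or with h1 | h1
      · right
        refine ⟨?_, h1⟩
        rw [h1] at hEB0
        simp only [he, Sum.elim_inl] at hEB0
        omega
      · left; exact h1
    -- card of C0
    have hEC0 := hEe C0 hC0p
    rw [hsum_e, if_pos hC0mem, if_neg hinr1C0] at hEC0
    have hdC0or : d C0 = Sum.inr 0 ∨ ∃ i, d C0 = Sum.inl i := by
      rcases hdc : d C0 with i | jj
      · right; exact ⟨i, rfl⟩
      · left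
        rcases h01 jj with rfl | rfl
        · rfl
        · exact absurd (hdc ▸ hd C0 hC0p) hinr1C0
    have hcardC0 : C0.card = k + 1 := by
      rcases hdC0or with h1 | ⟨i, h1⟩ <;> rw [h1] at hEC0 <;>
        simp only [he, Sum.elim_inl, Sum.elim_inr] at hEC0
      · omega
      · have hsub : {Sum.inl i, Sum.inr (0 : Fin 2)} ⊆ C0 := by
          intro z hz
          simp only [Finset.mem_insert, Finset.mem_singleton] at hz
          rcases hz with rfl | rfl
          · exact h1 ▸ hd C0 hC0p
          · exact hC0mem
        have h2 : 2 ≤ C0.card := by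
          have h3 : ({Sum.inl i, Sum.inr (0 : Fin 2)} :
              Finset (Fin (2 * k) ⊕ Fin 2)).card = 2 := by
            rw [Finset.card_insert_of_notMem (by simp), Finset.card_singleton]
          exact le_trans (le_of_eq h3.symm) (Finset.card_le_card hsub)
        omega
    have hdC0k : d C0 = Sum.inr 0 ∨ (k = 1 ∧ ∃ i, d C0 = Sum.inl i) := by
      rcases hdC0or with h1 | ⟨i, h1⟩
      · left; exact h1
      · right
        refine ⟨?_, ⟨i, h1⟩⟩
        rw [h1] at hEC0
        simp only [he, Sum.elim_inl] at hEC0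
        omega
    -- all parts are B0 or C0
    have hsumcard := π.sum_card_parts
    have huniv : (Finset.univ : Finset (Fin (2 * k) ⊕ Fin 2)).card = 2 * k + 2 := by
      simp [Fintype.card_sum]
    have hparts2 : ∀ B ∈ π.parts, B = B0 ∨ B = C0 := by
      intro B hBp
      by_contra hcon
      push_neg at hcon
      obtain ⟨h1, h2⟩ := hcon
      have hm1 : Sum.inr 1 ∉ B := fun h => h1 (π.eq_of_mem_parts hBp hB0p h hinr1B0)
      have hm0 : Sum.inr 0 ∉ B := fun h => h2 (π.eq_of_mem_parts hBp hC0p h hC0mem)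
      have hEB := hEe B hBp
      rw [hsum_e, if_neg hm0, if_neg hm1] at hEB
      have hdB : e (d B) = 1 := by
        rcases hdb : d B with i | jj
        · simp [he]
        · rcases h01 jj with rfl | rfl
          · exact absurd (hdb ▸ hd B hBp) hm0
          · exact absurd (hdb ▸ hd B hBp) hm1
      rw [hdB] at hEB
      have hcardB : B.card = 2 := by omega
      have hsub : {B0, C0, B} ⊆ π.parts := by
        intro Z hZ
        simp only [Finset.mem_insert, Finset.mem_singleton] at hZ
        rcases hZ with rfl | rfl | rfl
        · exact hB0p
        · exact hC0p
        · exact hBp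
      have hle : ∑ Z ∈ ({B0, C0, B} : Finset (Finset (Fin (2 * k) ⊕ Fin 2))), Z.card ≤
          ∑ Z ∈ π.parts, Z.card :=
        Finset.sum_le_sum_of_subset hsub
      rw [Finset.sum_insert (by simp [hB0C0, Ne.symm h1]),
        Finset.sum_insert (by simp [Ne.symm h2]), Finset.sum_singleton] at hle
      rw [hsumcard, huniv] at hle
      omega
    have hpartseq : π.parts = {B0, C0} := by
      apply Finset.Subset.antisymm
      · intro Z hZ
        rcases hparts2 Z hZ with rfl | rfl <;> simp
      · intro Z hZ
        simp only [Finset.mem_insert, Finset.mem_singleton] at hZ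
        rcases hZ with rfl | rfl
        · exact hB0p
        · exact hC0p
    -- the sets U and T
    set U := Finset.univ.filter (fun i : Fin (2 * k) => Sum.inl i ∈ B0) with hUdef
    set T := Finset.univ.filter (fun i : Fin (2 * k) => Sum.inl i ∈ C0) with hTdef
    have hUmem : ∀ i : Fin (2 * k), i ∈ U ↔ Sum.inl i ∈ B0 := by
      intro i; simp [hUdef]
    have hTmem : ∀ i : Fin (2 * k), i ∈ T ↔ Sum.inl i ∈ C0 := by
      intro i; simp [hTdef]
    have hUT : ∀ i : Fin (2 * k), (Sum.inl i ∈ B0 ∧ Sum.inl i ∉ C0) ∨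
        (Sum.inl i ∈ C0 ∧ Sum.inl i ∉ B0) := by
      intro i
      obtain ⟨Z, hZp, hZmem⟩ := π.exists_mem (Finset.mem_univ (Sum.inl i))
      rcases hparts2 Z hZp with rfl | rfl
      · exact Or.inl ⟨hZmem, fun h => hB0C0 (π.eq_of_mem_parts hB0p hC0p hZmem h)⟩
      · exact Or.inr ⟨hZmem, fun h => hB0C0 (π.eq_of_mem_parts hB0p hC0p h hZmem)⟩
    have hTcompl : T = Uᶜ := by
      ext i
      rw [Finset.mem_compl, hUmem, hTmem]
      rcases hUT i with ⟨h1, h2⟩ | ⟨h1, h2⟩ <;> tauto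
    have hB0eq : B0 = insert (Sum.inr 1) (U.image Sum.inl) := by
      ext z
      rcases z with i | jj
      · simp only [Finset.mem_insert, Finset.mem_image]
        constructor
        · intro h
          exact Or.inr ⟨i, (hUmem i).2 h, rfl⟩
        · rintro (h | ⟨i', hi', hh⟩)
          · exact absurd h (by simp)
          · rcases Sum.inl_injective hh
            exact (hUmem i).1 hi'
      · rcases h01 jj with rfl | rfl
        · simp only [Finset.mem_insert, Finset.mem_image]
          constructor
          · intro h; exact absurd h hinr0B0
          · rintro (h | ⟨i', _, hh⟩)
            · exact absurd h (by simp)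
            · exact absurd hh (by simp)
        · simp [hinr1B0]
    have hC0eq : C0 = insert (Sum.inr 0) (T.image Sum.inl) := by
      ext z
      rcases z with i | jj
      · simp only [Finset.mem_insert, Finset.mem_image]
        constructor
        · intro h
          exact Or.inr ⟨i, (hTmem i).2 h, rfl⟩
        · rintro (h | ⟨i', hi', hh⟩)
          · exact absurd h (by simp)
          · rcases Sum.inl_injective hh
            exact (hTmem i).1 hi'
      · rcases h01 jj with rfl | rfl
        · simp [hC0mem]
        · simp only [Finset.mem_insert, Finset.mem_image]
          constructor
          · intro h; exact absurd h hinr1C0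
          · rintro (h | ⟨i', _, hh⟩)
            · exact absurd h (by simp)
            · exact absurd hh (by simp)
    have hUcard : U.card = k := by
      have h1 := hcardB0
      rw [hB0eq, Finset.card_insert_of_notMem (by simp),
        Finset.card_image_of_injective _ Sum.inl_injective] at h1
      omega
    have hTcard : T.card = k := by
      have h1 := hcardC0
      rw [hC0eq, Finset.card_insert_of_notMem (by simp),
        Finset.card_image_of_injective _ Sum.inl_injective] at h1
      omega
    have h0U : (0 : Fin (2 * k)) ∈ U := (hUmem 0).2 hB0mem
    set P := ∏ i ∈ U, a i with hPdef
    set Q := ∏ i ∈ T, a i with hQdef2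
    have hPQ : P * Q = m ^ 2 := by
      rw [hPdef, hQdef2, hTcompl, Finset.prod_mul_prod_compl U a, hm]
    have hPpos : 0 < P := Finset.prod_pos fun i _ => ha i
    have hQpos : 0 < Q := Finset.prod_pos fun i _ => ha i
    -- block values are rational constants
    have hval : ∀ B ∈ π.parts, v (d B) / ∏ j ∈ B.erase (d B), v j =
        (((c (d B) : ℚ) / D B : ℚ) : FF) := by
      intro B hB
      rw [hden B]
      simp only [hqdef]
      rw [← hμd B hB, hvmono (d B), alg_monomial, alg_monomial, ← hx, ← hy, Rat.cast_div]
      rw [mul_div_mul_right _ _ (pow_ne_zero _ hy0), mul_div_mul_right _ _ (pow_ne_zero _ hx0)]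
    have h1 : (((c (d B0) : ℚ) / D B0 : ℚ) : FF) + (((c (d C0) : ℚ) / D C0 : ℚ) : FF) = 2 := by
      have h1 := hsum
      rw [hpartseq, Finset.sum_pair hB0C0, hval B0 hB0p, hval C0 hC0p] at h1
      exact h1
    have hsum2 : (c (d B0) : ℚ) / D B0 + (c (d C0) : ℚ) / D C0 = 2 := by
      have h2 : algebraMap ℚ FF ((c (d B0) : ℚ) / D B0 + (c (d C0) : ℚ) / D C0) =
          algebraMap ℚ FF 2 := by
        rw [eq_ratCast, eq_ratCast]
        push_cast
        push_cast at h1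
        rw [h1]
      exact RingHom.injective (algebraMap ℚ FF) h2
    -- compute the two terms
    have ht1 : (c (d B0) : ℚ) / D B0 = (m : ℚ) / (P : ℚ) ∨
        (c (d B0) : ℚ) / D B0 = (P : ℚ) / (m : ℚ) := by
      rcases hdB0k with hdB | ⟨hk1, hdB⟩
      · left
        have hc1 : c (d B0) = m := by rw [hdB]; simp [hc]
        have hD1 : D B0 = (P : ℚ) := by
          simp only [hDdef]
          rw [hdB, hB0eq, Finset.erase_insert (by simp),
            Finset.prod_image (fun i _ j _ h => Sum.inl_injective h)]
          rw [hPdef]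
          push_cast
          rfl
        rw [hc1, hD1]
      · right
        have hU0 : U = {0} := by
          have hcard1 : U.card = 1 := by rw [hUcard, hk1]
          obtain ⟨u, hu⟩ := Finset.card_eq_one.mp hcard1
          rw [hu]
          rw [hu, Finset.mem_singleton] at h0U
          rw [h0U]
        have hB0er : B0.erase (Sum.inl 0) = {Sum.inr 1} := by
          rw [hB0eq, hU0]
          ext z
          simp only [Finset.mem_erase, Finset.mem_insert, Finset.image_singleton,
            Finset.mem_singleton]
          constructor
          · rintro ⟨h1, h2 | h2⟩
            · exact h2
            · exact absurd h2 h1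
          · intro h
            subst h
            exact ⟨by simp, Or.inl rfl⟩
        have hc1 : c (d B0) = a 0 := by rw [hdB]; simp [hc]
        have hD1 : D B0 = (m : ℚ) := by
          simp only [hDdef]
          rw [hdB, hB0er, Finset.prod_singleton]
          simp [hc]
        have hP1 : P = a 0 := by rw [hPdef, hU0, Finset.prod_singleton]
        rw [hc1, hD1, hP1]
    have ht2 : (c (d C0) : ℚ) / D C0 = (m : ℚ) / (Q : ℚ) ∨
        (c (d C0) : ℚ) / D C0 = (Q : ℚ) / (m : ℚ) := by
      rcases hdC0k with hdC | ⟨hk1, i, hdC⟩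
      · left
        have hc1 : c (d C0) = m := by rw [hdC]; simp [hc]
        have hD1 : D C0 = (Q : ℚ) := by
          simp only [hDdef]
          rw [hdC, hC0eq, Finset.erase_insert (by simp),
            Finset.prod_image (fun i _ j _ h => Sum.inl_injective h)]
          rw [hQdef2]
          push_cast
          rfl
        rw [hc1, hD1]
      · right
        have hiT : i ∈ T := (hTmem i).2 (hdC ▸ hd C0 hC0p)
        have hT0 : T = {i} := by
          have hcard1 : T.card = 1 := by rw [hTcard, hk1]
          obtain ⟨u, hu⟩ := Finset.card_eq_one.mp hcard1
          rw [hu]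
          rw [hu, Finset.mem_singleton] at hiT
          rw [hiT]
        have hC0er : C0.erase (Sum.inl i) = {Sum.inr 0} := by
          rw [hC0eq, hT0]
          ext z
          simp only [Finset.mem_erase, Finset.mem_insert, Finset.image_singleton,
            Finset.mem_singleton]
          constructor
          · rintro ⟨h1, h2 | h2⟩
            · exact h2
            · exact absurd h2 h1
          · intro h
            subst h
            exact ⟨by simp, Or.inl rfl⟩
        have hc1 : c (d C0) = a i := by rw [hdC]; simp [hc]
        have hD1 : D C0 = (m : ℚ) := by
          simp only [hDdef]
          rw [hdC, hC0er, Finset.prod_singleton]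
          simp [hc]
        have hQ1 : Q = a i := by rw [hQdef2, hT0, Finset.prod_singleton]
        rw [hc1, hD1, hQ1]
    -- final arithmetic
    refine ⟨U, hUcard, ?_⟩
    rw [← hPdef]
    have hmq : (0 : ℚ) < (m : ℚ) := by exact_mod_cast hmpos
    have hPq : (0 : ℚ) < (P : ℚ) := by exact_mod_cast hPpos
    have hQq : (0 : ℚ) < (Q : ℚ) := by exact_mod_cast hQpos
    have hPQq : (P : ℚ) * (Q : ℚ) = (m : ℚ) ^ 2 := by exact_mod_cast hPQ
    have hm0 : (m : ℚ) ≠ 0 := ne_of_gt hmq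
    have hP0 : (P : ℚ) ≠ 0 := ne_of_gt hPq
    have hQ0 : (Q : ℚ) ≠ 0 := ne_of_gt hQq
    suffices hfin : (P : ℚ) = (m : ℚ) by exact_mod_cast hfin
    rcases ht1 with h1 | h1 <;> rcases ht2 with h2 | h2 <;> rw [h1, h2] at hsum2
    · -- m/P + m/Q = 2
      have e1 : (m : ℚ) * Q + (m : ℚ) * P = 2 * ((P : ℚ) * Q) := by
        field_simp at hsum2
        linarith
      have e2 : (P : ℚ) + Q = 2 * m := by
        apply mul_left_cancel₀ hm0
        rw [hPQq] at e1
        linarith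
      have e3 : ((P : ℚ) - m) ^ 2 = 0 := by linear_combination (P : ℚ) * e2 - hPQq
      have e4 : (P : ℚ) - m = 0 := by
        exact pow_eq_zero_iff (two_ne_zero) |>.mp e3
      linarith
    · -- m/P + Q/m = 2
      have e1 : (m : ℚ) * m + (Q : ℚ) * P = 2 * ((P : ℚ) * m) := by
        field_simp at hsum2
        linarith
      apply mul_right_cancel₀ hm0
      show (P : ℚ) * m = (m : ℚ) * m
      linear_combination (hPQq - e1) / 2
    · -- P/m + m/Q = 2
      have e1 : (P : ℚ) * Q + (m : ℚ) * m = 2 * ((m : ℚ) * Q) := by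
        field_simp at hsum2
        linarith
      have e2 : (Q : ℚ) = m := by
        apply mul_left_cancel₀ (mul_ne_zero (two_ne_zero) hm0)
        rw [hPQq] at e1
        linarith
      rw [e2] at hPQq
      apply mul_right_cancel₀ hm0
      rw [hPQq, sq]
    · -- P/m + Q/m = 2
      have e2 : (P : ℚ) + Q = 2 * m := by
        field_simp at hsum2
        linarith
      have e3 : ((P : ℚ) - m) ^ 2 = 0 := by linear_combination (P : ℚ) * e2 - hPQq
      have e4 : (P : ℚ) - m = 0 := by
        exact pow_eq_zero_iff (two_ne_zero) |>.mp e3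
      linarith



  · -- easy direction
    rintro ⟨S, hScard, hSprod⟩
    obtain ⟨S', hS'card, hS'prod, hS'0⟩ :
        ∃ S' : Finset (Fin (2 * k)), S'.card = k ∧ (∏ i ∈ S', a i) = m ∧
          (0 : Fin (2 * k)) ∈ S' := by
      by_cases h0 : (0 : Fin (2 * k)) ∈ S
      · exact ⟨S, hScard, hSprod, h0⟩
      · refine ⟨Sᶜ, ?_, ?_, by simpa using h0⟩
        · rw [Finset.card_compl, hScard]; simp; omega
        · have h1 := Finset.prod_mul_prod_compl S a
          rw [hSprod, hm] at h1
          have : m * ∏ i ∈ Sᶜ, a i = m * m := by rw [h1]; ring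
          exact Nat.eq_of_mul_eq_mul_left hmpos this
    classical
    set B : Finset (Fin (2 * k) ⊕ Fin 2) := insert (Sum.inr 1) (S'.image Sum.inl) with hB
    have hinr1B : Sum.inr 1 ∈ B := Finset.mem_insert_self _ _
    have hinr1nim : (Sum.inr 1 : Fin (2 * k) ⊕ Fin 2) ∉ S'.image Sum.inl := by simp
    have hinr0B : (Sum.inr 0 : Fin (2 * k) ⊕ Fin 2) ∉ B := by simp [hB]
    have hBne : B ≠ Bᶜ := by
      intro h
      have h2 := hinr1B
      rw [h, Finset.mem_compl] at h2
      exact h2 hinr1B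
    have hinr0Bc : (Sum.inr 0 : Fin (2 * k) ⊕ Fin 2) ∈ Bᶜ := Finset.mem_compl.2 hinr0B
    have hinr1Bc : (Sum.inr 1 : Fin (2 * k) ⊕ Fin 2) ∉ Bᶜ := by
      rw [Finset.mem_compl]; simp [hinr1B]
    have hQ : ∏ i ∈ S'ᶜ, a i = m := by
      have h1 := Finset.prod_mul_prod_compl S' a
      rw [hS'prod, hm] at h1
      have h2 : m * ∏ i ∈ S'ᶜ, a i = m * m := by rw [h1]; ring
      exact Nat.eq_of_mul_eq_mul_left hmpos h2
    have hBc : Bᶜ = insert (Sum.inr 0) (S'ᶜ.image Sum.inl) := by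
      ext j
      rcases j with i | j
      · simp [hB, Finset.mem_compl]
      · rcases h01 j with rfl | rfl <;> simp [hB, Finset.mem_compl]
    have hterm1 : v (Sum.inr 1) / ∏ j ∈ B.erase (Sum.inr 1), v j = 1 := by
      rw [hB, Finset.erase_insert hinr1nim, hprodv, hv3]
      have h1 : ∏ j ∈ S'.image Sum.inl, c j = m := by
        rw [Finset.prod_image (fun i _ j _ h => Sum.inl_injective h)]
        simp only [hc, Sum.elim_inl]
        exact hS'prod
      have h2 : ∑ j ∈ S'.image Sum.inl, e j = k := by
        rw [Finset.sum_image (fun i _ j _ h => Sum.inl_injective h)]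
        simp [he, hS'card]
      have h3 : ∑ j ∈ S'.image Sum.inl, f j = 1 := by
        rw [Finset.sum_image (fun i _ j _ h => Sum.inl_injective h)]
        simp only [hf, Sum.elim_inl]
        have h4 : ∀ i ∈ S', (if (i : ℕ) = 0 then 1 else 0) =
            (if i = (0 : Fin (2 * k)) then 1 else 0) := by
          intro i _
          simp [hziff i]
        rw [Finset.sum_congr rfl h4, Finset.sum_ite_eq' S' (0 : Fin (2 * k)) (fun _ => 1),
          if_pos hS'0]
      rw [h1, h2, h3, pow_one]
      exact div_self (mul_ne_zero
        (mul_ne_zero (Nat.cast_ne_zero.2 hmpos.ne') (pow_ne_zero _ hx0)) hy0)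
    have hterm2 : v (Sum.inr 0) / ∏ j ∈ Bᶜ.erase (Sum.inr 0), v j = 1 := by
      rw [hBc, Finset.erase_insert (by simp), hprodv, hv2]
      have h1 : ∏ j ∈ S'ᶜ.image Sum.inl, c j = m := by
        rw [Finset.prod_image (fun i _ j _ h => Sum.inl_injective h)]
        simp only [hc, Sum.elim_inl]
        exact hQ
      have h2 : ∑ j ∈ S'ᶜ.image Sum.inl, e j = k := by
        rw [Finset.sum_image (fun i _ j _ h => Sum.inl_injective h)]
        simp only [he, Sum.elim_inl, Finset.sum_const, smul_eq_mul, mul_one,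
          Finset.card_compl, hS'card, Fintype.card_fin]
        omega
      have h3 : ∑ j ∈ S'ᶜ.image Sum.inl, f j = 0 := by
        rw [Finset.sum_image (fun i _ j _ h => Sum.inl_injective h)]
        apply Finset.sum_eq_zero
        intro i hi
        simp only [hf, Sum.elim_inl, ite_eq_right_iff]
        intro h0
        exfalso
        exact (Finset.mem_compl.1 hi) (((hziff i).1 h0) ▸ hS'0)
      rw [h1, h2, h3, pow_zero, mul_one]
      exact div_self (mul_ne_zero (Nat.cast_ne_zero.2 hmpos.ne') (pow_ne_zero _ hx0))
    refine ⟨⟨{B, Bᶜ}, ?_, ?_, ?_⟩,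
      fun B' => if Sum.inr 1 ∈ B' then Sum.inr 1 else Sum.inr 0, ?_, ?_⟩
    · rw [Finset.supIndep_pair hBne]
      exact disjoint_compl_right
    · rw [Finset.sup_insert, Finset.sup_singleton, id, id, sup_compl_eq_top]
      rfl
    · intro hbot
      rcases Finset.mem_insert.1 hbot with h | h
      · exact absurd (h ▸ hinr1B) (Finset.notMem_empty _)
      · rw [Finset.mem_singleton] at h
        exact absurd (h ▸ hinr0Bc) (Finset.notMem_empty _)
    · intro B' hB'
      dsimp only
      rcases Finset.mem_insert.1 hB' with h | h
      · subst h; rw [if_pos hinr1B]; exact hinr1B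
      · rw [Finset.mem_singleton] at h; subst h
        rw [if_neg hinr1Bc]; exact hinr0Bc
    · show ∑ B' ∈ ({B, Bᶜ} : Finset _),
        v (if Sum.inr 1 ∈ B' then Sum.inr 1 else Sum.inr 0) /
          ∏ j ∈ B'.erase (if Sum.inr 1 ∈ B' then Sum.inr 1 else Sum.inr 0), v j = 2
      rw [Finset.sum_pair hBne, if_pos hinr1B, if_neg hinr1Bc, hterm1, hterm2]
      norm_num
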